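/- With the setup above (T ⊆ ∏_{g∈N} O a full-rank local complete O-subalgebra, J an ideal with residue images J_g = λ^{m_g} O): if the λ-adic valuation of #(T/J) is strictly less than [F : F_ℓ] · Σ_{g∈N} m_g, where F is the residue field of O and ℓ its residue characteristic, then J is not a principal ideal of T. -/

import Mathlib

open Submodule in
/-- cardinality of `O ⧸ (ϖ^k)` in a DVR. -/
lemma card_quot_pow_span {O : Type*} [CommRing O] [IsDomain O] [IsDiscreteValuationRing O]
    (ϖ : O) (hϖ : Irreducible ϖ) (k : ℕ) :
    Nat.card (O ⧸ Ideal.span {ϖ ^ k}) = Nat.card (O ⧸ Ideal.span {ϖ}) ^ k := by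
  haveI : (Ideal.span {ϖ}).IsPrime := (Ideal.span_singleton_prime hϖ.ne_zero).mpr hϖ.prime
  have h := cardQuot_pow_of_prime (S := O) (P := Ideal.span {ϖ})
    (by simpa [Ideal.span_singleton_eq_bot] using hϖ.ne_zero) (i := k)
  rwa [Ideal.span_singleton_pow, cardQuot_apply, cardQuot_apply] at h

set_option maxHeartbeats 1000000
set_option synthInstance.maxHeartbeats 400000

/-- Same setup as the principality criterion: `O` a complete DVR with uniformizer `ϖ`,
residue field of cardinality `ℓ^d` (`ℓ` the residue characteristic, `d = [F : F_ℓ]`),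
`T ⊆ ∏_{g ∈ ι} O` a full-rank local complete `O`-subalgebra, `J` an ideal with residue
images `ϖ^{m g} O`.  If `val_ℓ(#(T/J)) < d · Σ_g m g`, then `J` is not principal. -/
theorem stmt8 (O : Type*) [CommRing O] [IsDomain O] [IsDiscreteValuationRing O]
    [IsAdicComplete (IsLocalRing.maximalIdeal O) O]
    (ϖ : O) (hϖ : Irreducible ϖ) [Finite (O ⧸ Ideal.span {ϖ})]
    (ℓ d : ℕ) (hℓ : ℓ.Prime) (hd : 0 < d)
    (hcard : Nat.card (O ⧸ Ideal.span {ϖ}) = ℓ ^ d)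
    (ι : Type*) [Fintype ι] [Nonempty ι]
    (T : Subalgebra O (ι → O)) [IsLocalRing T]
    (hfull : ∀ x : ι → O, ∃ n : ℕ, ϖ ^ n • x ∈ T)
    (J : Ideal T) (hfin : Finite (T ⧸ J))
    (m : ι → ℕ) (hm : ∀ g, 0 < m g)
    (hTg : ∀ g : ι, Function.Surjective ((Pi.evalRingHom (fun _ : ι => O) g).comp T.val.toRingHom))
    (hJg : ∀ g : ι,
      Ideal.map ((Pi.evalRingHom (fun _ : ι => O) g).comp T.val.toRingHom) J
        = Ideal.span {ϖ ^ m g})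
    (hval : padicValNat ℓ (Nat.card (T ⧸ J)) < d * ∑ g : ι, m g) :
    ¬ ∃ t : T, J = Ideal.span {t} := by
  classical
  haveI : Fact ℓ.Prime := ⟨hℓ⟩
  rintro ⟨t, ht⟩
  set G := ι → O
  -- each coordinate of t generates (ϖ^{m g})
  have hspan : ∀ g : ι, Ideal.span {(t : G) g} = Ideal.span {ϖ ^ m g} := by
    intro g
    have := hJg g
    rw [ht, Ideal.map_span, Set.image_singleton] at this
    exact this
  have htg_ne : ∀ g : ι, (t : G) g ≠ 0 := by
    intro g hg
    have := hspan g
    rw [hg, Ideal.span_singleton_eq_bot.mpr rfl] at this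
    have : ϖ ^ m g = 0 := Ideal.span_singleton_eq_bot.mp this.symm
    exact pow_ne_zero _ hϖ.ne_zero this
  -- the inclusion of T into G as an additive monoid hom
  set f : T →+ G := T.val.toRingHom.toAddMonoidHom with hf
  have hf_inj : Function.Injective f := Subtype.val_injective
  have hf_range : f.range = (Subalgebra.toSubmodule T).toAddSubgroup := by
    ext x
    simp only [AddMonoidHom.mem_range, hf]
    constructor
    · rintro ⟨y, rfl⟩; exact y.2
    · intro hx; exact ⟨⟨x, hx⟩, rfl⟩
  set A : AddSubgroup G := (Subalgebra.toSubmodule T).toAddSubgroup with hA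
  -- multiplication by t on G
  set φ : G →+ G := AddMonoidHom.mulLeft (t : G) with hφ
  have hφ_inj : Function.Injective φ := by
    intro x y hxy
    funext g
    have : (t : G) g * x g = (t : G) g * y g := congrFun hxy g
    exact mul_left_cancel₀ (htg_ne g) this
  -- the range of φ as a submodule
  set P : Submodule O G := Submodule.pi Set.univ (fun g => Ideal.span {(t : G) g}) with hP
  have hmemP : ∀ x : G, x ∈ P ↔ ∀ g, (t : G) g ∣ x g := by
    intro x
    rw [hP, Submodule.mem_pi]
    exact ⟨fun h g => Ideal.mem_span_singleton.mp (h g (Set.mem_univ g)),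
      fun h g _ => Ideal.mem_span_singleton.mpr (h g)⟩
  have hφ_range : φ.range = P.toAddSubgroup := by
    ext x
    simp only [AddMonoidHom.mem_range, Submodule.mem_toAddSubgroup, hmemP]
    constructor
    · rintro ⟨y, rfl⟩ g
      exact ⟨y g, rfl⟩
    · intro h
      choose y hy using h
      refine ⟨y, funext fun g => ?_⟩
      show (t : G) g * y g = x g
      exact (hy g).symm
  -- image of J inside G equals φ(A)
  have hmap : AddSubgroup.map f J.toAddSubgroup = AddSubgroup.map φ A := by
    ext x
    simp only [AddSubgroup.mem_map, Submodule.mem_toAddSubgroup, hA]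
    constructor
    · rintro ⟨s, hs, rfl⟩
      rw [ht, Ideal.mem_span_singleton'] at hs
      obtain ⟨u, rfl⟩ := hs
      exact ⟨(u : G), u.2, by simp [hφ, hf, mul_comm]⟩
    · rintro ⟨y, hy, rfl⟩
      refine ⟨⟨y, hy⟩ * t, ?_, ?_⟩
      · rw [ht, Ideal.mem_span_singleton']; exact ⟨⟨y, hy⟩, rfl⟩
      · simp [hφ, hf, mul_comm]
  -- finiteness: A has finite index in G
  have hsingle : ∀ (g : ι) (c : O), (Pi.single g c : G) = c • (Pi.single g 1 : G) := by
    intro g c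
    ext i
    by_cases hig : i = g
    · subst hig; simp
    · simp [Pi.single_apply, hig]
  obtain ⟨n, hn⟩ : ∃ n : ι → ℕ, ∀ g, ϖ ^ n g • (Pi.single g 1 : G) ∈ T := by
    choose n hn using fun g => hfull (Pi.single g 1 : G); exact ⟨n, hn⟩
  set N : ℕ := Finset.univ.sup n with hN
  set P' : Submodule O G := Submodule.pi Set.univ (fun _ => Ideal.span {ϖ ^ N}) with hP'
  have hP'le : P' ≤ Subalgebra.toSubmodule T := by
    intro x hx
    rw [hP', Submodule.mem_pi] at hx
    have hx' : ∀ g, ∃ c, x g = ϖ ^ N * c :=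
      fun g => Ideal.mem_span_singleton.mp (hx g (Set.mem_univ g))
    choose c hc using hx'
    have hxsum : x = ∑ g : ι, Pi.single g (x g) := by
      exact (Finset.univ_sum_single x).symm
    rw [hxsum]
    refine Submodule.sum_mem _ fun g _ => ?_
    have hng : n g ≤ N := Finset.le_sup (Finset.mem_univ g)
    have : (Pi.single g (x g) : G) = (c g * ϖ ^ (N - n g)) • (ϖ ^ n g • (Pi.single g 1 : G)) := by
      rw [smul_smul, hsingle g (x g), hc g]
      congr 1
      rw [mul_assoc, ← pow_add, Nat.sub_add_cancel hng, mul_comm]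
    rw [this]
    exact Submodule.smul_mem _ _ (hn g)
  -- the index of A is nonzero
  have hcardP' : Nat.card (G ⧸ P') = (ℓ ^ (d * N)) ^ Fintype.card ι := by
    rw [Nat.card_congr (Submodule.quotientPi (fun _ : ι => Ideal.span {ϖ ^ N})).toEquiv,
      Nat.card_pi]
    have h : ∀ _g : ι, Nat.card (O ⧸ Ideal.span {ϖ ^ N}) = ℓ ^ (d * N) := fun _ => by
      rw [card_quot_pow_span ϖ hϖ N, hcard, ← pow_mul]
    rw [Finset.prod_congr rfl fun g _ => h g, Finset.prod_const, Finset.card_univ]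
  have hAindex : A.index ≠ 0 := by
    intro h0
    have hle : P'.toAddSubgroup ≤ A := fun x hx => hP'le hx
    have hdvd : A.index ∣ P'.toAddSubgroup.index := AddSubgroup.index_dvd_of_le hle
    rw [h0] at hdvd
    have hz : P'.toAddSubgroup.index = 0 := Nat.eq_zero_of_zero_dvd hdvd
    have h1 : P'.toAddSubgroup.index = Nat.card (G ⧸ P') := Submodule.cardQuot_apply P'
    rw [h1, hcardP'] at hz
    revert hz
    exact pow_ne_zero _ (pow_ne_zero _ hℓ.pos.ne')
  -- cardinality of G ⧸ P
  have hcardP : Nat.card (G ⧸ P) = ℓ ^ (d * ∑ g : ι, m g) := by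
    rw [Nat.card_congr (Submodule.quotientPi (fun g : ι => Ideal.span {(t : G) g})).toEquiv,
      Nat.card_pi]
    have : ∀ g : ι, Nat.card (O ⧸ Ideal.span {(t : G) g}) = ℓ ^ (d * m g) := by
      intro g
      rw [hspan g, card_quot_pow_span ϖ hϖ, hcard, ← pow_mul]
    rw [Finset.prod_congr rfl fun g _ => this g, Finset.prod_pow_eq_pow_sum]
    congr 1
    rw [Finset.mul_sum]
  -- index computation
  have key : Nat.card (T ⧸ J) * A.index = A.index * Nat.card (G ⧸ P) := by
    have h1 : (AddSubgroup.map f J.toAddSubgroup).index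
        = J.toAddSubgroup.index * f.range.index :=
      AddSubgroup.index_map_of_injective _ hf_inj
    have h2 : (AddSubgroup.map φ A).index = A.index * φ.range.index :=
      AddSubgroup.index_map_of_injective _ hφ_inj
    have h3 : J.toAddSubgroup.index = Nat.card (T ⧸ J) := Submodule.cardQuot_apply J
    have h4 : φ.range.index = Nat.card (G ⧸ P) := by
      rw [hφ_range]; exact Submodule.cardQuot_apply P
    have h5 : f.range.index = A.index := by rw [hf_range]
    calc Nat.card (T ⧸ J) * A.index
        = J.toAddSubgroup.index * f.range.index := by rw [h3, h5]
      _ = (AddSubgroup.map f J.toAddSubgroup).index := h1.symm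
      _ = (AddSubgroup.map φ A).index := by rw [hmap]
      _ = A.index * φ.range.index := h2
      _ = A.index * Nat.card (G ⧸ P) := by rw [h4]
  have hcardTJ : Nat.card (T ⧸ J) = ℓ ^ (d * ∑ g : ι, m g) := by
    have := key
    rw [hcardP] at this
    exact Nat.eq_of_mul_eq_mul_right (Nat.pos_of_ne_zero hAindex)
      (by rw [this, mul_comm])
  rw [hcardTJ, padicValNat.prime_pow] at hval
  exact lt_irrefl _ hval
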